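/- If L is a stable triplet cover of a fully-resolved X-tree T with n := |X| ≥ 3, then L is a shellable lasso for T, i.e., the set binom(X,2) − L is T-shellable. -/

import Mathlib

open SimpleGraph

/-- An `X`-tree: a finite tree whose leaf set is (the image of) `X`,
with no vertices of degree 2. -/
structure XTree (α : Type) (X : Set α) where
  V : Type
  fintypeV : Fintype V
  tree : SimpleGraph V
  isTree : tree.IsTree
  ι : α → V
  ι_injOn : Set.InjOn ι X
  leaf_iff : ∀ v : V, (tree.neighborSet v).ncard = 1 ↔ v ∈ ι '' X
  no_deg_two : ∀ v : V, (tree.neighborSet v).ncard ≠ 2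

namespace XTree

variable {α : Type} {X : Set α}

/-- A vertex is interior if it is not a leaf. -/
def IsInterior (T : XTree α X) (v : T.V) : Prop := v ∉ T.ι '' X

/-- Fully-resolved: every interior vertex has degree 3. -/
def IsFullyResolved (T : XTree α X) : Prop :=
  ∀ v : T.V, T.IsInterior v → (T.tree.neighborSet v).ncard = 3

/-- The unique path between two vertices of the tree. -/
noncomputable def treePath (T : XTree α X) (u v : T.V) : T.tree.Walk u v :=
  (T.isTree.existsUnique_path u v).exists.choose

lemma treePath_isPath (T : XTree α X) (u v : T.V) : (T.treePath u v).IsPath :=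
  (T.isTree.existsUnique_path u v).exists.choose_spec

/-- Weighted path distance between two vertices. -/
noncomputable def pathDist (T : XTree α X) (w : Sym2 T.V → ℝ) (u v : T.V) : ℝ :=
  ((T.treePath u v).edges.map w).sum

lemma treePath_symm (T : XTree α X) (u v : T.V) :
    T.treePath u v = (T.treePath v u).reverse :=
  (T.isTree.existsUnique_path u v).unique (T.treePath_isPath u v)
    ((T.treePath_isPath v u).reverse)

lemma pathDist_symm (T : XTree α X) (w : Sym2 T.V → ℝ) (u v : T.V) :
    T.pathDist w u v = T.pathDist w v u := by
  unfold pathDist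
  rw [treePath_symm, SimpleGraph.Walk.edges_reverse, List.map_reverse, List.sum_reverse]

/-- The induced distance on pairs of leaf labels. -/
noncomputable def cordDist (T : XTree α X) (w : Sym2 T.V → ℝ) : Sym2 α → ℝ :=
  Sym2.lift ⟨fun a b => T.pathDist w (T.ι a) (T.ι b),
    fun a b => T.pathDist_symm w (T.ι a) (T.ι b)⟩

/-- An edge-weighting assigns a nonnegative weight to every edge. -/
def IsEdgeWeighting (T : XTree α X) (w : Sym2 T.V → ℝ) : Prop :=
  ∀ e ∈ T.tree.edgeSet, 0 ≤ w e

/-- A proper edge-weighting gives positive weight to every interior edge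
(i.e. every edge not incident with a leaf). -/
def IsProperWeighting (T : XTree α X) (w : Sym2 T.V → ℝ) : Prop :=
  T.IsEdgeWeighting w ∧ ∀ e ∈ T.tree.edgeSet, (∀ v ∈ e, T.IsInterior v) → 0 < w e

/-- The set of cords (2-element subsets) of `X`. -/
def cords (X : Set α) : Set (Sym2 α) := {c | ¬ c.IsDiag ∧ ∀ a ∈ c, a ∈ X}

/-- Two weighted trees are `L`-isometric if their leaf distances agree on `L`. -/
def LIsometric (T : XTree α X) (w : Sym2 T.V → ℝ) (T' : XTree α X) (w' : Sym2 T'.V → ℝ)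
    (L : Set (Sym2 α)) : Prop :=
  ∀ c ∈ L, T.cordDist w c = T'.cordDist w' c

/-- `L` is an edge-weight lasso for `T`. -/
def IsEdgeWeightLasso (T : XTree α X) (L : Set (Sym2 α)) : Prop :=
  ∀ w w' : Sym2 T.V → ℝ, T.IsProperWeighting w → T.IsProperWeighting w' →
    LIsometric T w T w' L → ∀ e ∈ T.tree.edgeSet, w e = w' e

/-- Two `X`-trees are equivalent if there is a graph isomorphism fixing `X`. -/
def Equivalent (T T' : XTree α X) : Prop :=
  ∃ φ : T.tree ≃g T'.tree, ∀ a ∈ X, φ (T.ι a) = T'.ι a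

/-- `L` is a topological lasso for `T`. -/
def IsTopologicalLasso (T : XTree α X) (L : Set (Sym2 α)) : Prop :=
  ∀ (T' : XTree α X) (w : Sym2 T.V → ℝ) (w' : Sym2 T'.V → ℝ),
    T.IsProperWeighting w → T'.IsProperWeighting w' →
    LIsometric T w T' w' L → Equivalent T T'

/-- `L` is a strong lasso for `T`. -/
def IsStrongLasso (T : XTree α X) (L : Set (Sym2 α)) : Prop :=
  IsEdgeWeightLasso T L ∧ IsTopologicalLasso T L

/-- The set of leaf labels on the side of edge `e` containing endpoint `u`. -/
def sideSet (T : XTree α X) (e : Sym2 T.V) (u : T.V) : Set α :=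
  {a | a ∈ X ∧ (T.tree.deleteEdges {e}).Reachable (T.ι a) u}

/-- The clusters of `T`: leaf sets of the two components of `T - e`, over all edges `e`. -/
def clus (T : XTree α X) : Set (Set α) :=
  {A | ∃ e ∈ T.tree.edgeSet, ∃ u ∈ e, A = T.sideSet e u}

/-- A stable transversal for a collection of subsets of `α`. -/
def IsStableTransversal (C : Set (Set α)) (f : Set α → α) : Prop :=
  (∀ A ∈ C, f A ∈ A) ∧ ∀ A ∈ C, ∀ B ∈ C, f A ∈ B → B ⊆ A → f A = f B

/-- Leaf labels of the component of `T - v` containing the vertex `u`. -/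
def compSet (T : XTree α X) (v u : T.V) : Set α :=
  {a | a ∈ X ∧ ∃ p : T.tree.Walk (T.ι a) u, v ∉ p.support}

/-- The triplet cover `L_{(T,f)}` generated by a transversal `f`. -/
def tripletCoverOf (T : XTree α X) (f : Set α → α) : Set (Sym2 α) :=
  {c | ∃ v u₁ u₂ : T.V, T.IsInterior v ∧ T.tree.Adj v u₁ ∧ T.tree.Adj v u₂ ∧ u₁ ≠ u₂ ∧
    c = s(f (T.compSet v u₁), f (T.compSet v u₂))}

/-- `L` is a stable triplet cover of `T`. -/
def IsStableTripletCover (T : XTree α X) (L : Set (Sym2 α)) : Prop :=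
  ∃ f : Set α → α, IsStableTransversal (clus T) f ∧ L = tripletCoverOf T f

/-- `T|{a,b,c,d}` is the quartet tree `ab||cd`: the four leaves are distinct members
of `X` and the path from `a` to `b` is vertex-disjoint from the path from `c` to `d`. -/
def Quartet (T : XTree α X) (a b c d : α) : Prop :=
  a ∈ X ∧ b ∈ X ∧ c ∈ X ∧ d ∈ X ∧ List.Pairwise (· ≠ ·) [a, b, c, d] ∧
  ∀ (p : T.tree.Walk (T.ι a) (T.ι b)) (q : T.tree.Walk (T.ι c) (T.ι d)),
    p.IsPath → q.IsPath → ∀ v, v ∈ p.support → v ∉ q.support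

/-- The cord `c` admits pivots relative to already-available cords `L ∪ earlier`. -/
def HasPivots (T : XTree α X) (L : Set (Sym2 α)) (earlier : List (Sym2 α))
    (c : Sym2 α) : Prop :=
  ∃ a b p q : α, c = s(a, b) ∧ Quartet T a p q b ∧
    ∀ c' ∈ [s(a, p), s(a, q), s(b, p), s(b, q), s(p, q)], c' ∈ L ∨ c' ∈ earlier

/-- `ord` is a shellable ordering of `cords X - L` with respect to `T`. -/
def IsShellableOrdering (T : XTree α X) (L : Set (Sym2 α)) (ord : List (Sym2 α)) : Prop :=
  ord.Nodup ∧ (∀ c, c ∈ ord ↔ c ∈ cords X \ L) ∧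
  ∀ i (h : i < ord.length), HasPivots T L (ord.take i) (ord.get ⟨i, h⟩)

/-- `L` is a shellable lasso for `T`: `L ⊆ cords X`, every element of `X` occurs in some
cord of `L`, and `cords X - L` admits a shellable ordering. -/
def IsShellableLasso (T : XTree α X) (L : Set (Sym2 α)) : Prop :=
  L ⊆ cords X ∧ (∀ a ∈ X, ∃ c ∈ L, a ∈ c) ∧ ∃ ord, IsShellableOrdering T L ord

/-- The graph `(Xs, L)` is a 2d-tree. -/
def Is2dTree (Xs : Set α) (L : Set (Sym2 α)) : Prop :=
  ∃ ord : List α, ord.Nodup ∧ (∀ a, a ∈ ord ↔ a ∈ Xs) ∧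
    ∃ h2 : 2 ≤ ord.length,
      s(ord.get ⟨0, by omega⟩, ord.get ⟨1, by omega⟩) ∈ L ∧
      ∀ i (h : i < ord.length), 2 ≤ i →
        {b | b ∈ ord.take i ∧ s(ord.get ⟨i, h⟩, b) ∈ L}.ncard = 2

/-- Leaves `x` and `y` form a cherry of `T`. -/
def IsCherry (T : XTree α X) (x y : α) : Prop :=
  x ≠ y ∧ x ∈ X ∧ y ∈ X ∧ ∃ v : T.V, T.tree.Adj (T.ι x) v ∧ T.tree.Adj (T.ι y) v

/-- `T'` is (equivalent to) the restriction `T|Y` of `T` to `Y ⊆ X`, characterized by the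
fact that the clusters of `T|Y` are exactly the nonempty proper restrictions to `Y`
of clusters of `T`. -/
def IsRestrictionOf {Y : Set α} (T' : XTree α Y) (T : XTree α X) : Prop :=
  Y ⊆ X ∧ clus T' = {A | (∃ B ∈ clus T, A = B ∩ Y) ∧ A.Nonempty ∧ A ≠ Y}

open Classical in
/-- One application of the extension rule (R), acting on a state consisting of
the current set of cords together with the current distance values. -/
def RStep (Xs : Set α) (S S' : Set (Sym2 α) × (Sym2 α → ℝ)) : Prop :=
  ∃ x y u z : α, x ∈ Xs ∧ y ∈ Xs ∧ u ∈ Xs ∧ z ∈ Xs ∧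
    List.Pairwise (· ≠ ·) [x, y, u, z] ∧
    s(x, y) ∈ S.1 ∧ s(y, u) ∈ S.1 ∧ s(y, z) ∈ S.1 ∧ s(x, u) ∈ S.1 ∧ s(u, z) ∈ S.1 ∧
    s(x, z) ∉ S.1 ∧
    S.2 s(x, y) + S.2 s(u, z) < S.2 s(x, u) + S.2 s(y, z) ∧
    S'.1 = insert s(x, z) S.1 ∧
    S'.2 = Function.update S.2 s(x, z) (S.2 s(x, u) + S.2 s(y, z) - S.2 s(y, u))

/-- `S` is the result `cl_R(L)` (with its `d`-values) of exhaustively applying rule (R)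
starting from `L` with initial distance values `d`. -/
def IsRClosureOf (Xs : Set α) (L : Set (Sym2 α)) (d : Sym2 α → ℝ)
    (S : Set (Sym2 α) × (Sym2 α → ℝ)) : Prop :=
  Relation.ReflTransGen (RStep Xs) (L, d) S ∧ ∀ S', ¬ RStep Xs S S'

end XTree
namespace STCaux
open SimpleGraph XTree

variable {α : Type} {X : Set α}

/-- `v` lies on the unique path from `u` to `w`. -/
def btw (T : XTree α X) (u v w : T.V) : Prop := v ∈ (T.treePath u w).support

variable {T : XTree α X}

lemma tp_unique {u v : T.V} (p : T.tree.Walk u v) (hp : p.IsPath) : p = T.treePath u v :=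
  (T.isTree.existsUnique_path u v).unique hp (T.treePath_isPath u v)

lemma treePath_self (u : T.V) : T.treePath u u = SimpleGraph.Walk.nil :=
  (tp_unique _ SimpleGraph.Walk.IsPath.nil).symm

lemma btw_self_iff {u v : T.V} : btw T u v u ↔ v = u := by
  unfold btw
  rw [treePath_self]
  simp

lemma btw_left {u w : T.V} : btw T u u w := SimpleGraph.Walk.start_mem_support _

lemma btw_right {u w : T.V} : btw T u w w := SimpleGraph.Walk.end_mem_support _

lemma btw_symm {u v w : T.V} (h : btw T u v w) : btw T w v u := by
  unfold btw at h ⊢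
  rw [T.treePath_symm u w] at h
  rw [SimpleGraph.Walk.support_reverse, List.mem_reverse] at h
  exact h

lemma nbtw_symm {u v w : T.V} (h : ¬ btw T u v w) : ¬ btw T w v u :=
  fun hb => h (btw_symm hb)

lemma btw_decomp {u v w : T.V} (h : btw T u v w) :
    T.treePath u w = (T.treePath u v).append (T.treePath v w) := by
  classical
  have hp := T.treePath_isPath u w
  have h1 : ((T.treePath u w).takeUntil v h) = T.treePath u v := tp_unique _ (hp.takeUntil h)
  have h2 : ((T.treePath u w).dropUntil v h) = T.treePath v w := tp_unique _ (hp.dropUntil h)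
  rw [← h1, ← h2]
  exact ((T.treePath u w).take_spec h).symm

lemma not_btw_iff {u v w : T.V} : ¬ btw T u v w ↔ ∃ p : T.tree.Walk u w, v ∉ p.support := by
  classical
  constructor
  · intro h
    exact ⟨T.treePath u w, h⟩
  · rintro ⟨p, hp⟩ hb
    have hbp : p.bypass = T.treePath u w := tp_unique _ p.bypass_isPath
    exact hp (p.support_bypass_subset (hbp ▸ hb))

lemma not_btw_glue {u v w z : T.V} (h1 : ¬ btw T u v w) (h2 : ¬ btw T w v z) :
    ¬ btw T u v z := by
  rw [not_btw_iff] at h1 h2 ⊢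
  obtain ⟨p, hp⟩ := h1
  obtain ⟨q, hq⟩ := h2
  refine ⟨p.append q, ?_⟩
  rw [SimpleGraph.Walk.mem_support_append_iff]
  tauto

lemma btw_nodup {u v w z : T.V} (h : btw T u v w) (h1 : btw T u z v) (h2 : btw T v z w) :
    z = v := by
  have hd := btw_decomp h
  have hnd := (T.treePath_isPath u w).support_nodup
  rw [hd, SimpleGraph.Walk.support_append, List.nodup_append] at hnd
  by_contra hne
  have hz2 : z ∈ (T.treePath v w).support.tail := by
    have h2' : z ∈ (T.treePath v w).support := h2
    rw [SimpleGraph.Walk.support_eq_cons, List.mem_cons] at h2'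
    rcases h2' with h2' | h2'
    · exact absurd h2' hne
    · exact h2'
  exact hnd.2.2 z h1 z hz2 rfl

/-- If `z` lies strictly between on `path v w` then `v` doesn't lie on `path z w`. -/
lemma btw_antisym' {v z w : T.V} (h : btw T v z w) (h' : btw T z v w) : v = z :=
  btw_nodup h btw_left h'

lemma btw_antisym {a v w : T.V} (h : btw T a v w) (h' : btw T a w v) : v = w :=
  btw_nodup h' h btw_right

lemma btw_push {a u v b : T.V} (h : btw T a u v) (h' : btw T a v b) : btw T u v b := by
  by_cases huv : u = v
  · subst huv; exact btw_left
  by_contra hc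
  have h2 : ¬ btw T a v u := fun hb => huv (btw_antisym h hb)
  exact (not_btw_glue h2 hc) h'

lemma btw_pull {a z₀ z₁ b : T.V} (h : btw T a z₀ b) (h' : btw T z₀ z₁ b) (hne : z₀ ≠ z₁) :
    btw T a z₀ z₁ := by
  by_contra hc
  have h2 : ¬ btw T z₁ z₀ b := fun hb => hne (btw_antisym' h' hb)
  exact (not_btw_glue hc h2) h

lemma btw_total {a v w b : T.V} (hv : btw T a v b) (hw : btw T a w b) :
    btw T a v w ∨ btw T a w v := by
  by_cases hvw : w = v
  · subst hvw; exact Or.inl btw_right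
  have hd := btw_decomp hv
  have hw' := hw
  unfold btw at hw'
  rw [hd, SimpleGraph.Walk.mem_support_append_iff] at hw'
  rcases hw' with hw' | hw'
  · exact Or.inr hw'
  · -- w on path from v to b
    left
    have hw'' : btw T v w b := hw'
    by_contra hc
    have h2 : ¬ btw T w v b := fun hb => hvw ((btw_antisym' hw'' hb).symm)
    exact (not_btw_glue hc h2) hv

lemma btw_mem_decomp_left {u v w z : T.V} (h : btw T u v w) (hz : btw T u z v) :
    btw T u z w := by
  unfold btw
  rw [btw_decomp h, SimpleGraph.Walk.mem_support_append_iff]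
  exact Or.inl hz

lemma btw_mem_decomp_right {u v w z : T.V} (h : btw T u v w) (hz : btw T v z w) :
    btw T u z w := by
  unfold btw
  rw [btw_decomp h, SimpleGraph.Walk.mem_support_append_iff]
  exact Or.inr hz

lemma treePath_adj {x y : T.V} (h : T.tree.Adj x y) :
    T.treePath x y = SimpleGraph.Walk.cons h SimpleGraph.Walk.nil := by
  refine (tp_unique _ ?_).symm
  rw [SimpleGraph.Walk.cons_isPath_iff]
  refine ⟨SimpleGraph.Walk.IsPath.nil, ?_⟩
  simp [h.ne]

lemma btw_adj_iff {x y v : T.V} (h : T.tree.Adj x y) :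
    btw T x v y ↔ v = x ∨ v = y := by
  unfold btw
  rw [treePath_adj h]
  simp [or_comm]

lemma btw_two_step {v x y : T.V} (hx : T.tree.Adj v x) (hy : T.tree.Adj v y) (hxy : x ≠ y) :
    btw T x v y := by
  have hpath : (SimpleGraph.Walk.cons hx.symm (SimpleGraph.Walk.cons hy SimpleGraph.Walk.nil)
      : T.tree.Walk x y).IsPath := by
    rw [SimpleGraph.Walk.cons_isPath_iff, SimpleGraph.Walk.cons_isPath_iff]
    refine ⟨⟨SimpleGraph.Walk.IsPath.nil, by simp [hy.ne]⟩, ?_⟩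
    simp [hx.ne', hxy]
  have := tp_unique _ hpath
  unfold btw
  rw [← this]
  simp

end STCaux
namespace STCaux
open SimpleGraph XTree

variable {α : Type} {X : Set α} {T : XTree α X}

lemma mem_compSet_iff {v u : T.V} {x : α} :
    x ∈ T.compSet v u ↔ x ∈ X ∧ ¬ btw T (T.ι x) v u := by
  unfold XTree.compSet
  rw [Set.mem_setOf_eq, not_btw_iff]

lemma reachable_delete_iff {v u : T.V} (h : T.tree.Adj v u) (w : T.V) :
    (T.tree.deleteEdges {s(v,u)}).Reachable w u ↔ ¬ btw T w v u := by
  classical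
  constructor
  · intro hr
    obtain ⟨W⟩ := hr
    have hWsup : ∀ W' : (T.tree.deleteEdges {s(v,u)}).Walk w u, v ∉ W'.support := by
      intro W' hv
      -- then we'd get a walk from v to u in the deleted graph
      have W2 := W'.dropUntil v hv
      have hedges : ∀ e ∈ W2.edges, e ∈ T.tree.edgeSet := by
        intro e he
        have := W2.edges_subset_edgeSet he
        rw [SimpleGraph.edgeSet_deleteEdges] at this
        exact this.1
      have hnot : ∀ e ∈ W2.edges, e ≠ s(v,u) := by
        intro e he
        have := W2.edges_subset_edgeSet he
        rw [SimpleGraph.edgeSet_deleteEdges] at this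
        intro hh
        exact this.2 (by rw [hh]; rfl)
      set P : T.tree.Walk v u := W2.transfer T.tree hedges with hP
      have hbedges : P.bypass.edges ⊆ P.edges := SimpleGraph.Walk.edges_bypass_subset P
      have hbp : P.bypass = T.treePath v u := tp_unique _ P.bypass_isPath
      have : s(v,u) ∈ P.bypass.edges := by
        rw [hbp, treePath_adj h]
        simp
      have hPe : s(v,u) ∈ P.edges := hbedges this
      rw [hP, SimpleGraph.Walk.edges_transfer] at hPe
      exact (hnot _ hPe) rfl
    -- transfer W to the tree
    have hedges : ∀ e ∈ W.edges, e ∈ T.tree.edgeSet := by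
      intro e he
      have := W.edges_subset_edgeSet he
      rw [SimpleGraph.edgeSet_deleteEdges] at this
      exact this.1
    have hW' : (W.transfer T.tree hedges).support = W.support :=
      SimpleGraph.Walk.support_transfer _ _
    rw [not_btw_iff]
    refine ⟨W.transfer T.tree hedges, ?_⟩
    rw [hW']
    exact hWsup W
  · intro hb
    rw [not_btw_iff] at hb
    obtain ⟨p, hp⟩ := hb
    have hpne : ∀ e ∈ p.edges, e ∉ ({s(v,u)} : Set (Sym2 T.V)) := by
      intro e he hmem
      rw [Set.mem_singleton_iff] at hmem
      subst hmem
      exact hp (p.fst_mem_support_of_mem_edges he)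
    exact ⟨p.toDeleteEdges _ hpne⟩

lemma compSet_eq_sideSet {v u : T.V} (h : T.tree.Adj v u) :
    T.compSet v u = T.sideSet s(v,u) u := by
  ext x
  rw [mem_compSet_iff]
  unfold XTree.sideSet
  rw [Set.mem_setOf_eq, reachable_delete_iff h]

lemma compSet_mem_clus {v u : T.V} (h : T.tree.Adj v u) : T.compSet v u ∈ clus T := by
  exact ⟨s(v,u), h, u, Sym2.mem_mk_right v u, compSet_eq_sideSet h⟩

lemma compSet_subset_X {v u : T.V} : T.compSet v u ⊆ X := fun _ hx => hx.1

lemma compSet_disjoint {v u₁ u₂ : T.V} (h1 : T.tree.Adj v u₁) (h2 : T.tree.Adj v u₂)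
    (hne : u₁ ≠ u₂) {x : α} (hx1 : x ∈ T.compSet v u₁) (hx2 : x ∈ T.compSet v u₂) : False := by
  rw [mem_compSet_iff] at hx1 hx2
  have hglue := not_btw_glue (nbtw_symm hx1.2) hx2.2
  exact hglue (btw_two_step h1 h2 hne)

/-- The set of leaf labels on the `y`-side of the vertex `v`. -/
def sideL (T : XTree α X) (y : α) (v : T.V) : Set α :=
  {x | x ∈ X ∧ ¬ btw T (T.ι x) v (T.ι y)}

lemma sideL_subset_X {y : α} {v : T.V} : sideL T y v ⊆ X := fun _ hx => hx.1

lemma mem_sideL_iff {y x : α} {v : T.V} :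
    x ∈ sideL T y v ↔ x ∈ X ∧ ¬ btw T (T.ι x) v (T.ι y) := Iff.rfl

lemma self_mem_sideL {y : α} {v : T.V} (hy : y ∈ X) (hv : v ≠ T.ι y) : y ∈ sideL T y v :=
  ⟨hy, fun hb => hv (btw_self_iff.mp hb)⟩

lemma sideL_eq_compSet {y : α} {v u : T.V} (h : T.tree.Adj v u)
    (hy : ¬ btw T (T.ι y) v u) : sideL T y v = T.compSet v u := by
  ext x
  rw [mem_sideL_iff, mem_compSet_iff]
  constructor
  · rintro ⟨hx, hb⟩
    exact ⟨hx, not_btw_glue hb hy⟩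
  · rintro ⟨hx, hb⟩
    exact ⟨hx, not_btw_glue hb (nbtw_symm hy)⟩

lemma side_neighbor {y : α} {v : T.V} (hy : T.ι y ≠ v) :
    ∃ u, T.tree.Adj v u ∧ ¬ btw T (T.ι y) v u := by
  obtain ⟨u, hadj, q, hq⟩ := SimpleGraph.Walk.exists_eq_cons_of_ne (Ne.symm hy) (T.treePath v (T.ι y))
  have hqp : q.IsPath := by
    have := T.treePath_isPath v (T.ι y)
    rw [hq] at this
    exact this.of_cons
  have hvq : v ∉ q.support := by
    have := T.treePath_isPath v (T.ι y)
    rw [hq, SimpleGraph.Walk.cons_isPath_iff] at this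
    exact this.2
  have : q = T.treePath u (T.ι y) := tp_unique q hqp
  refine ⟨u, hadj, nbtw_symm ?_⟩
  unfold btw
  rw [← this]
  exact hvq

lemma sideL_mem_clus {y : α} {v : T.V} (hy : T.ι y ≠ v) : sideL T y v ∈ clus T := by
  obtain ⟨u, hadj, hn⟩ := side_neighbor hy
  rw [sideL_eq_compSet hadj hn]
  exact compSet_mem_clus hadj

lemma sideL_subset {a : α} {v w : T.V} (h : btw T (T.ι a) v w) :
    sideL T a v ⊆ sideL T a w := by
  rintro x ⟨hx, hb⟩
  refine ⟨hx, fun hbw => hb ?_⟩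
  exact btw_mem_decomp_right hbw (btw_symm h)

lemma sideL_congr {a p : α} {v : T.V} (h : ¬ btw T (T.ι a) v (T.ι p)) :
    sideL T p v = sideL T a v := by
  ext x
  rw [mem_sideL_iff, mem_sideL_iff]
  constructor
  · rintro ⟨hx, hb⟩
    exact ⟨hx, not_btw_glue hb (nbtw_symm h)⟩
  · rintro ⟨hx, hb⟩
    exact ⟨hx, not_btw_glue hb h⟩

end STCaux
namespace STCaux
open SimpleGraph XTree

variable {α : Type} {X : Set α} {T : XTree α X}

lemma two_neighbors_interior {v x z : T.V} (hx : T.tree.Adj v x) (hz : T.tree.Adj v z)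
    (hxz : x ≠ z) : T.IsInterior v := by
  haveI := T.fintypeV
  intro hv
  have h1 : (T.tree.neighborSet v).ncard = 1 := (T.leaf_iff v).mpr hv
  have hsub : ({x, z} : Set T.V) ⊆ T.tree.neighborSet v := by
    intro y hy
    rcases hy with rfl | hy
    · exact hx
    · rw [Set.mem_singleton_iff] at hy; subst hy; exact hz
  have := Set.ncard_le_ncard hsub (Set.toFinite _)
  rw [Set.ncard_pair hxz, h1] at this
  omega

lemma leaf_unique_neighbor {a : α} (ha : a ∈ X) :
    ∃ v, T.tree.neighborSet (T.ι a) = {v} := by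
  have h1 : (T.tree.neighborSet (T.ι a)).ncard = 1 := (T.leaf_iff _).mpr ⟨a, ha, rfl⟩
  exact Set.ncard_eq_one.mp h1

lemma pendant_btw {a : α} {v : T.V} (ha : a ∈ X)
    (hv : T.tree.neighborSet (T.ι a) = {v}) {w : T.V} (hw : w ≠ T.ι a) :
    btw T w v (T.ι a) := by
  obtain ⟨u, hadj, q, hq⟩ :=
    SimpleGraph.Walk.exists_eq_cons_of_ne (show T.ι a ≠ w from Ne.symm hw)
      (T.treePath (T.ι a) w)
  have hu : u = v := by
    have : u ∈ T.tree.neighborSet (T.ι a) := hadj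
    rwa [hv, Set.mem_singleton_iff] at this
  have hb : btw T (T.ι a) u w := by
    unfold btw
    rw [hq]
    simp [SimpleGraph.Walk.support_cons]
  rw [hu] at hb
  exact btw_symm hb

lemma pendant_sideL {a : α} {v : T.V} (ha : a ∈ X)
    (hv : T.tree.neighborSet (T.ι a) = {v}) : sideL T a v = {a} := by
  have hadj : T.tree.Adj (T.ι a) v := by rw [← SimpleGraph.mem_neighborSet, hv]; rfl
  ext x
  rw [mem_sideL_iff, Set.mem_singleton_iff]
  constructor
  · rintro ⟨hx, hb⟩
    by_contra hxa
    have hne : T.ι x ≠ T.ι a := fun h => hxa (T.ι_injOn hx ha h)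
    exact hb (pendant_btw ha hv hne)
  · rintro rfl
    exact ⟨ha, fun hb => hadj.ne' (btw_self_iff.mp hb)⟩

lemma leaf_neighbor_interior (hcard : 3 ≤ X.ncard) {a : α} {v : T.V} (ha : a ∈ X)
    (hv : T.tree.neighborSet (T.ι a) = {v}) : T.IsInterior v := by
  have hadj : T.tree.Adj (T.ι a) v := by rw [← SimpleGraph.mem_neighborSet, hv]; rfl
  intro hvim
  obtain ⟨c, hc, hcv⟩ := hvim
  -- find b ∈ X distinct from a and c
  have hnotsub : ¬ X ⊆ {a, c} := by
    intro hsub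
    have := Set.ncard_le_ncard hsub (Set.toFinite _)
    have h2 : ({a, c} : Set α).ncard ≤ 2 := by
      apply le_trans (Set.ncard_insert_le _ _)
      simp
    omega
  obtain ⟨b, hb, hbnot⟩ := Set.not_subset.mp hnotsub
  have hba : b ≠ a := fun h => hbnot (by rw [h]; left; rfl)
  have hbc : b ≠ c := fun h => hbnot (by rw [h]; right; rfl)
  have hbv : T.ι b ≠ v := by
    rw [← hcv]
    exact fun h => hbc (T.ι_injOn hb hc h)
  -- v is on the path from ι b to ι a
  have hbtw : btw T (T.ι b) v (T.ι a) := pendant_btw ha hv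
    (fun h => hba (T.ι_injOn hb ha h))
  -- extract predecessor of v on this path: decompose path(ι b, ι a) at v
  have hd : T.treePath (T.ι b) (T.ι a) =
      (T.treePath (T.ι b) v).append (T.treePath v (T.ι a)) := btw_decomp hbtw
  obtain ⟨z, hadjz, q, hq⟩ := SimpleGraph.Walk.exists_eq_cons_of_ne (Ne.symm hbv)
    (T.treePath v (T.ι b))
  have hza : z ≠ T.ι a := by
    -- path from v to ι a is the single edge; z is on the other side
    intro h
    subst h
    -- then btw v (ι a) (ι b) : ι a on path from v to ι b
    have h1 : btw T v (T.ι a) (T.ι b) := by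
      unfold btw; rw [hq]; simp [SimpleGraph.Walk.support_cons]
    have := btw_antisym' h1 (btw_symm hbtw)
    exact hadj.ne this.symm
  have hint : T.IsInterior v := two_neighbors_interior hadjz
    (hadj.symm) (by rwa [ne_eq])
  exact hint ⟨c, hc, hcv⟩

lemma btw_interior {a b : α} {v : T.V} (ha : a ∈ X) (hb : b ∈ X)
    (h : btw T (T.ι a) v (T.ι b)) (h1 : v ≠ T.ι a) (h2 : v ≠ T.ι b) : T.IsInterior v := by
  obtain ⟨x, hadjx, qx, hqx⟩ := SimpleGraph.Walk.exists_eq_cons_of_ne h1 (T.treePath v (T.ι a))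
  obtain ⟨z, hadjz, qz, hqz⟩ := SimpleGraph.Walk.exists_eq_cons_of_ne h2 (T.treePath v (T.ι b))
  refine two_neighbors_interior hadjx hadjz ?_
  -- x is on path(v, ι a), z on path (v, ι b); both differ from v; nodup of full path a→b
  intro hxz
  subst hxz
  have hxa : btw T v x (T.ι a) := by unfold btw; rw [hqx]; simp [SimpleGraph.Walk.support_cons]
  have hxb : btw T v x (T.ι b) := by unfold btw; rw [hqz]; simp [SimpleGraph.Walk.support_cons]
  have := btw_nodup h (btw_symm hxa) hxb
  exact hadjx.ne this.symm

lemma third_neighbor {v x y : T.V} (hT : T.IsFullyResolved) (hint : T.IsInterior v)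
    (hx : T.tree.Adj v x) (hy : T.tree.Adj v y) (hxy : x ≠ y) :
    ∃ z, T.tree.Adj v z ∧ z ≠ x ∧ z ≠ y := by
  have h3 := hT v hint
  obtain ⟨n₁, n₂, n₃, h12, h13, h23, hset⟩ := Set.ncard_eq_three.mp h3
  have hxm : x ∈ T.tree.neighborSet v := hx
  have hym : y ∈ T.tree.neighborSet v := hy
  rw [hset] at hxm hym
  have hn₁ : n₁ ∈ T.tree.neighborSet v := by rw [hset]; simp
  have hn₂ : n₂ ∈ T.tree.neighborSet v := by rw [hset]; simp
  have hn₃ : n₃ ∈ T.tree.neighborSet v := by rw [hset]; simp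
  simp only [Set.mem_insert_iff, Set.mem_singleton_iff] at hxm hym
  rcases hxm with rfl | rfl | rfl <;> rcases hym with rfl | rfl | rfl <;>
    first
      | exact absurd rfl hxy
      | exact ⟨n₃, hn₃, by tauto, by tauto⟩
      | exact ⟨n₂, hn₂, by tauto, by tauto⟩
      | exact ⟨n₁, hn₁, by tauto, by tauto⟩

end STCaux
namespace STCaux
open SimpleGraph XTree

variable {α : Type} {X : Set α} {T : XTree α X}

lemma exists_neighbor_notin (hT : T.IsFullyResolved) {v : T.V} (hint : T.IsInterior v)
    (x y : T.V) : ∃ z, T.tree.Adj v z ∧ z ≠ x ∧ z ≠ y := by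
  have h3 := hT v hint
  obtain ⟨n₁, n₂, n₃, h12, h13, h23, hset⟩ := Set.ncard_eq_three.mp h3
  have hn₁ : T.tree.Adj v n₁ := by rw [← SimpleGraph.mem_neighborSet, hset]; simp
  have hn₂ : T.tree.Adj v n₂ := by rw [← SimpleGraph.mem_neighborSet, hset]; simp
  have hn₃ : T.tree.Adj v n₃ := by rw [← SimpleGraph.mem_neighborSet, hset]; simp
  by_contra hc
  push_neg at hc
  have e₁ : n₁ = x ∨ n₁ = y := by
    by_cases hh : n₁ = x
    · exact Or.inl hh
    · exact Or.inr (hc n₁ hn₁ hh)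
  have e₂ : n₂ = x ∨ n₂ = y := by
    by_cases hh : n₂ = x
    · exact Or.inl hh
    · exact Or.inr (hc n₂ hn₂ hh)
  have e₃ : n₃ = x ∨ n₃ = y := by
    by_cases hh : n₃ = x
    · exact Or.inl hh
    · exact Or.inr (hc n₃ hn₃ hh)
  rcases e₁ with rfl | rfl <;> rcases e₂ with rfl | rfl <;> rcases e₃ with rfl | rfl <;>
    simp_all

lemma compSet_nonempty (hT : T.IsFullyResolved) {v u : T.V} (h : T.tree.Adj v u) :
    (T.compSet v u).Nonempty := by
  classical
  haveI := T.fintypeV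
  set S : Set T.V := {w | ¬ btw T u v w} with hS
  have huS : u ∈ S := by
    rw [hS, Set.mem_setOf_eq, btw_self_iff]
    exact h.ne
  obtain ⟨w, hwS, hmax⟩ := Set.Finite.exists_maximalFor
    (fun w => (T.treePath u w).length) S (Set.toFinite S) ⟨u, huS⟩
  have hwv : v ∉ (T.treePath u w).support := hwS
  have hleaf : w ∈ T.ι '' X := by
    by_contra hwint
    have hwint' : T.IsInterior w := hwint
    -- any neighbor n of w avoiding the path and ≠ v gives a longer member of S
    have key : ∀ n : T.V, T.tree.Adj w n → n ∉ (T.treePath u w).support → n ≠ v → False := by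
      intro n hadj hnsup hnv
      set Q : T.tree.Walk u n :=
        (T.treePath u w).append (SimpleGraph.Walk.cons hadj SimpleGraph.Walk.nil) with hQ
      have hQpath : Q.IsPath := by
        rw [SimpleGraph.Walk.isPath_def, hQ, SimpleGraph.Walk.support_append]
        simp only [SimpleGraph.Walk.support_cons, SimpleGraph.Walk.support_nil, List.tail_cons]
        rw [List.nodup_append]
        refine ⟨(T.treePath_isPath u w).support_nodup, List.nodup_singleton n, ?_⟩
        intro x hx y hx2
        rw [List.mem_singleton] at hx2
        rw [hx2]
        rintro rfl
        exact hnsup hx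
      have hQeq : Q = T.treePath u n := tp_unique Q hQpath
      have hnS : n ∈ S := by
        rw [hS, Set.mem_setOf_eq]
        unfold btw
        rw [← hQeq, hQ, SimpleGraph.Walk.mem_support_append_iff]
        rintro (hv1 | hv2)
        · exact hwv hv1
        · simp only [SimpleGraph.Walk.support_cons, SimpleGraph.Walk.support_nil,
            List.mem_cons, List.mem_singleton] at hv2
          rcases hv2 with hv2 | hv2 | hv2
          · exact hwv (hv2 ▸ SimpleGraph.Walk.end_mem_support _)
          · exact hnv hv2.symm
          · exact absurd hv2 List.not_mem_nil
      have hlen : (T.treePath u n).length = (T.treePath u w).length + 1 := by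
        rw [← hQeq, hQ, SimpleGraph.Walk.length_append]
        simp
      have hle : (T.treePath u w).length ≤ (T.treePath u n).length := by omega
      have := hmax hnS hle
      simp only [hlen] at this
      omega
    by_cases hwu : w = u
    · subst hwu
      obtain ⟨n, hadj, hnv, _⟩ := exists_neighbor_notin hT hwint' v v
      refine key n hadj ?_ hnv
      rw [treePath_self]
      simp only [SimpleGraph.Walk.support_nil, List.mem_singleton]
      exact fun hnw => hadj.ne hnw.symm
    · obtain ⟨x₀, hadjx₀, q, hq⟩ := SimpleGraph.Walk.exists_eq_cons_of_ne
        hwu (T.treePath w u)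
      have hpen : ∀ n, T.tree.Adj w n → n ∈ (T.treePath u w).support → n = x₀ := by
        intro n hadj hmem
        have hb : btw T w n u := btw_symm hmem
        have hd := btw_decomp hb
        rw [treePath_adj hadj] at hd
        simp only [SimpleGraph.Walk.cons_append, SimpleGraph.Walk.nil_append] at hd
        have h2 := congrArg SimpleGraph.Walk.support hd
        have h3 := congrArg SimpleGraph.Walk.support hq
        rw [SimpleGraph.Walk.support_cons] at h2 h3
        rw [h2] at h3
        have h4 : (T.treePath n u).support = q.support := by
          exact (List.cons_injective.eq_iff.mp h3)
        rw [SimpleGraph.Walk.support_eq_cons (T.treePath n u),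
          SimpleGraph.Walk.support_eq_cons q] at h4
        injection h4
      obtain ⟨n, hadj, hnx₀, hnv⟩ := exists_neighbor_notin hT hwint' x₀ v
      exact key n hadj (fun hmem => hnx₀ (hpen n hadj hmem)) hnv
  obtain ⟨x, hx, hxw⟩ := hleaf
  subst hxw
  refine ⟨x, hx, (T.treePath u (T.ι x)).reverse, ?_⟩
  rw [SimpleGraph.Walk.support_reverse, List.mem_reverse]
  exact hwv

end STCaux
namespace STCaux
open SimpleGraph XTree

variable {α : Type} {X : Set α} {T : XTree α X} {f : Set α → α}

lemma btw_adj_dichotomy {u z₀ z₁ : T.V} (hadj : T.tree.Adj z₀ z₁) (h : ¬ btw T u z₀ z₁) :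
    btw T u z₁ z₀ := by
  set W : T.tree.Walk u z₀ :=
    (T.treePath u z₁).append (SimpleGraph.Walk.cons hadj.symm SimpleGraph.Walk.nil) with hW
  have hWp : W.IsPath := by
    rw [SimpleGraph.Walk.isPath_def, hW, SimpleGraph.Walk.support_append]
    simp only [SimpleGraph.Walk.support_cons, SimpleGraph.Walk.support_nil, List.tail_cons]
    rw [List.nodup_append]
    refine ⟨(T.treePath_isPath u z₁).support_nodup, List.nodup_singleton _, ?_⟩
    intro x hx y hx2
    rw [List.mem_singleton] at hx2
    rw [hx2]
    rintro rfl
    exact h hx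
  have hWeq : W = T.treePath u z₀ := tp_unique W hWp
  unfold btw
  rw [← hWeq, hW, SimpleGraph.Walk.mem_support_append_iff]
  exact Or.inl (SimpleGraph.Walk.end_mem_support _)

lemma f_mem_sideL (hf : IsStableTransversal (clus T) f) {y : α} {v : T.V}
    (hy : T.ι y ≠ v) : f (sideL T y v) ∈ sideL T y v :=
  hf.1 _ (sideL_mem_clus hy)

lemma triplet_mem (hf : IsStableTransversal (clus T) f) {a b : α} {v : T.V}
    (ha : a ∈ X) (hb : b ∈ X) (hv : T.IsInterior v) (hbtw : btw T (T.ι a) v (T.ι b))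
    (hfa : f (sideL T a v) = a) (hfb : f (sideL T b v) = b) :
    s(a, b) ∈ tripletCoverOf T f := by
  have hva : T.ι a ≠ v := fun h => hv ⟨a, ha, h⟩
  have hvb : T.ι b ≠ v := fun h => hv ⟨b, hb, h⟩
  obtain ⟨u₁, hadj₁, hn₁⟩ := side_neighbor (T := T) hva
  obtain ⟨u₂, hadj₂, hn₂⟩ := side_neighbor (T := T) hvb
  have hne : u₁ ≠ u₂ := by
    rintro rfl
    exact (not_btw_glue hn₁ (nbtw_symm hn₂)) hbtw
  refine ⟨v, u₁, u₂, hv, hadj₁, hadj₂, hne, ?_⟩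
  rw [← sideL_eq_compSet hadj₁ hn₁, ← sideL_eq_compSet hadj₂ hn₂, hfa, hfb]

/-- The candidate values for one half of the measure of a cord. -/
def halfSet (T : XTree α X) (f : Set α → α) (a b : α) : Set ℕ :=
  {n | ∃ v : T.V, T.IsInterior v ∧ btw T (T.ι a) v (T.ι b) ∧
    f (sideL T a v) = a ∧ (sideL T a v).ncard = n}

noncomputable def half (T : XTree α X) (f : Set α → α) (a b : α) : ℕ :=
  sSup (halfSet T f a b)

lemma halfSet_bddAbove (hfin : X.Finite) (a b : α) : BddAbove (halfSet T f a b) := by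
  refine ⟨X.ncard, fun n hn => ?_⟩
  obtain ⟨v, _, _, _, hv⟩ := hn
  exact hv ▸ Set.ncard_le_ncard sideL_subset_X hfin

lemma le_half (hfin : X.Finite) {a b : α} {n : ℕ} (hmem : n ∈ halfSet T f a b) :
    n ≤ half T f a b :=
  le_csSup (halfSet_bddAbove hfin a b) hmem

noncomputable def mu (T : XTree α X) (f : Set α → α) : Sym2 α → ℕ :=
  Sym2.lift ⟨fun a b => half T f a b + half T f b a, fun _ _ => add_comm _ _⟩

lemma mu_mk (a b : α) : mu T f s(a, b) = half T f a b + half T f b a :=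
  Sym2.lift_mk _ _ _

end STCaux
namespace STCaux
open SimpleGraph XTree

variable {α : Type} {X : Set α} {T : XTree α X} {f : Set α → α}

lemma main_side (hfin : X.Finite) (hcard : 3 ≤ X.ncard) (hT : T.IsFullyResolved)
    (hf : IsStableTransversal (clus T) f)
    {a b : α} (ha : a ∈ X) (hb : b ∈ X) (hab : a ≠ b)
    (hmiss : s(a, b) ∉ tripletCoverOf T f) :
    ∃ (z₀ z₁ : T.V) (p : α),
      T.IsInterior z₀ ∧ T.IsInterior z₁ ∧ T.tree.Adj z₀ z₁ ∧
      btw T (T.ι a) z₀ (T.ι b) ∧ btw T (T.ι a) z₁ (T.ι b) ∧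
      btw T (T.ι a) z₀ z₁ ∧ btw T z₀ z₁ (T.ι b) ∧
      p ∈ X ∧ p ≠ a ∧ p ≠ b ∧
      btw T (T.ι p) z₀ (T.ι a) ∧ btw T (T.ι p) z₀ (T.ι b) ∧
      f (sideL T a z₀) = a ∧ (sideL T a z₀).ncard = half T f a b ∧
      sideL T p z₁ = sideL T a z₁ ∧ f (sideL T a z₁) = p ∧
      half T f a b < (sideL T a z₁).ncard ∧
      s(a, p) ∈ tripletCoverOf T f := by
  have hci : T.ι a ≠ T.ι b := fun h => hab (T.ι_injOn ha hb h)
  -- the candidate set is nonempty: take the neighbor of the leaf a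
  obtain ⟨v₁, hv₁⟩ := leaf_unique_neighbor (T := T) ha
  have hadjav₁ : T.tree.Adj (T.ι a) v₁ := by
    rw [← SimpleGraph.mem_neighborSet, hv₁]; rfl
  have hv₁int : T.IsInterior v₁ := leaf_neighbor_interior hcard ha hv₁
  have hbtw₁ : btw T (T.ι a) v₁ (T.ι b) := btw_symm (pendant_btw ha hv₁ hci.symm)
  have hfa₁ : f (sideL T a v₁) = a := by
    have hmem := f_mem_sideL hf (show T.ι a ≠ v₁ from hadjav₁.ne)
    rw [pendant_sideL ha hv₁] at hmem ⊢
    exact hmem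
  have hSelne : (halfSet T f a b).Nonempty := ⟨_, v₁, hv₁int, hbtw₁, hfa₁, rfl⟩
  -- z₀ : the attainer of the maximum
  obtain ⟨z₀, hz₀int, hz₀btw, hfz₀, hz₀card₀⟩ :=
    Nat.sSup_mem hSelne (halfSet_bddAbove hfin a b)
  have hz₀card : (sideL T a z₀).ncard = half T f a b := by
    unfold half
    exact hz₀card₀
  have hιaz₀ : T.ι a ≠ z₀ := fun h => hz₀int ⟨a, ha, h⟩
  -- z₁ : the successor of z₀ towards b
  have hz₀b : z₀ ≠ T.ι b := fun h => hz₀int ⟨b, hb, h.symm⟩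
  obtain ⟨z₁, hadj01, q, hq⟩ :=
    SimpleGraph.Walk.exists_eq_cons_of_ne hz₀b (T.treePath z₀ (T.ι b))
  have hbtw01b : btw T z₀ z₁ (T.ι b) := by
    unfold btw
    rw [hq]
    simp [SimpleGraph.Walk.support_cons]
  have hqinfo := T.treePath_isPath z₀ (T.ι b)
  rw [hq, SimpleGraph.Walk.cons_isPath_iff] at hqinfo
  have hqeq : q = T.treePath z₁ (T.ι b) := tp_unique q hqinfo.1
  have hnbtw10b : ¬ btw T z₁ z₀ (T.ι b) := by
    unfold btw
    rw [← hqeq]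
    exact hqinfo.2
  have hne01 : z₀ ≠ z₁ := hadj01.ne
  have hE : btw T (T.ι a) z₀ z₁ := btw_pull hz₀btw hbtw01b hne01
  have hz₁btw : btw T (T.ι a) z₁ (T.ι b) := btw_mem_decomp_right hz₀btw hbtw01b
  have hz₁a : z₁ ≠ T.ι a := by
    intro h
    exact hz₀int ⟨a, ha, (btw_self_iff.mp (h ▸ hE)).symm ▸ rfl⟩
  have hz₁b : z₁ ≠ T.ι b := by
    intro h
    -- then z₀ is adjacent to the leaf b; derive s(a,b) ∈ L
    obtain ⟨v', hv'⟩ := leaf_unique_neighbor (T := T) hb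
    have hz₀v' : z₀ = v' := by
      have : z₀ ∈ T.tree.neighborSet (T.ι b) := by
        rw [SimpleGraph.mem_neighborSet]
        exact (h ▸ hadj01).symm
      rwa [hv', Set.mem_singleton_iff] at this
    have hfb₀ : f (sideL T b z₀) = b := by
      have hmem := f_mem_sideL hf (show T.ι b ≠ z₀ from (Ne.symm hz₀b))
      rw [hz₀v', pendant_sideL hb hv'] at hmem ⊢
      exact hmem
    exact hmiss (triplet_mem hf ha hb hz₀int hz₀btw hfz₀ hfb₀)
  have hz₁int : T.IsInterior z₁ := btw_interior ha hb hz₁btw hz₁a hz₁b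
  have hιaz₁ : T.ι a ≠ z₁ := Ne.symm hz₁a
  -- p := the transversal of the a-side of z₁
  set p := f (sideL T a z₁) with hp
  have hpmem : p ∈ sideL T a z₁ := f_mem_sideL hf hιaz₁
  have hpX : p ∈ X := hpmem.1
  -- the a-side neighbor of z₀
  obtain ⟨ua, hadjua, hnua⟩ := side_neighbor (T := T) hιaz₀
  have hseq : sideL T a z₀ = T.compSet z₀ ua := sideL_eq_compSet hadjua hnua
  have huaz₁ : ua ≠ z₁ := fun h => hnua (h ▸ hE)
  -- the third neighbor and a witness leaf in its component
  obtain ⟨u₃, hadj₃, h₃ua, h₃z₁⟩ := exists_neighbor_notin hT hz₀int ua z₁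
  obtain ⟨x, hxmem⟩ := compSet_nonempty hT hadj₃
  have hxX : x ∈ X := hxmem.1
  have hxnb : ¬ btw T (T.ι x) z₀ u₃ := (mem_compSet_iff.mp hxmem).2
  have hbtwz₁z₀u₃ : btw T z₁ z₀ u₃ := btw_two_step hadj01 hadj₃ (Ne.symm h₃z₁)
  -- x belongs to the a-side of z₁
  have f1 : ¬ btw T (T.ι x) z₁ u₃ := by
    intro hbw
    exact hxnb (btw_mem_decomp_right hbw hbtwz₁z₀u₃)
  have hu₃z₀a : btw T u₃ z₀ (T.ι a) := by
    by_contra hcc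
    exact (not_btw_glue hcc hnua) (btw_two_step hadj₃ hadjua h₃ua)
  have f2 : ¬ btw T u₃ z₁ (T.ι a) := by
    intro hbw
    have hd := btw_decomp hu₃z₀a
    have hbw' : z₁ ∈ (T.treePath u₃ (T.ι a)).support := hbw
    rw [hd, SimpleGraph.Walk.mem_support_append_iff] at hbw'
    rcases hbw' with hbw' | hbw'
    · have hpath2 : (SimpleGraph.Walk.cons hadj₃.symm SimpleGraph.Walk.nil :
          T.tree.Walk u₃ z₀).IsPath := by
        rw [SimpleGraph.Walk.cons_isPath_iff]
        exact ⟨SimpleGraph.Walk.IsPath.nil, by simp [hadj₃.ne']⟩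
      have htp2 := tp_unique _ hpath2
      rw [← htp2] at hbw'
      have this : z₁ = u₃ ∨ z₁ = z₀ ∨ z₁ ∈ ([] : List T.V) := by
        simpa only [SimpleGraph.Walk.support_cons, SimpleGraph.Walk.support_nil,
          List.mem_cons, List.mem_singleton] using hbw'
      rcases this with h' | h' | h'
      · exact h₃z₁ h'.symm
      · exact hne01 h'.symm
      · exact absurd h' List.not_mem_nil
    · have : btw T z₀ z₁ (T.ι a) := hbw'
      exact hne01 (btw_antisym hE (btw_symm this))
  have hxA1 : x ∈ sideL T a z₁ := ⟨hxX, not_btw_glue f1 f2⟩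
  have hxA0 : x ∉ sideL T a z₀ := by
    rw [hseq]
    intro hxin
    exact compSet_disjoint hadjua hadj₃ (Ne.symm h₃ua) hxin hxmem
  -- strict growth of the a-side
  have hssub : sideL T a z₀ ⊂ sideL T a z₁ := by
    rw [Set.ssubset_iff_subset_ne]
    refine ⟨sideL_subset hE, fun h => hxA0 (h ▸ hxA1)⟩
  have hlt : (sideL T a z₀).ncard < (sideL T a z₁).ncard :=
    Set.ncard_lt_ncard hssub (hfin.subset sideL_subset_X)
  have hP : half T f a b < (sideL T a z₁).ncard := hz₀card ▸ hlt
  have hpa : p ≠ a := by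
    intro h
    have hmem2 : (sideL T a z₁).ncard ∈ halfSet T f a b :=
      ⟨z₁, hz₁int, hz₁btw, h ▸ hp.symm, rfl⟩
    exact absurd (le_half hfin hmem2) (by omega)
  -- p is not on the a-side of z₀ (stability), so it hangs at z₀
  have hJ : btw T (T.ι p) z₀ (T.ι a) := by
    by_contra hc
    have hpin : p ∈ sideL T a z₀ := ⟨hpX, hc⟩
    have := hf.2 _ (sideL_mem_clus hιaz₁) _ (sideL_mem_clus hιaz₀)
      (by rw [← hp]; exact hpin) (sideL_subset hE)
    rw [← hp, hfz₀] at this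
    exact hpa this
  -- side a z₁ is the z₀-component of z₁
  have hnacz : ¬ btw T (T.ι a) z₁ z₀ := by
    intro h
    exact hne01 (btw_antisym hE h)
  have hsz₁ : sideL T a z₁ = T.compSet z₁ z₀ := sideL_eq_compSet hadj01.symm hnacz
  have hnpz₁z₀ : ¬ btw T (T.ι p) z₁ z₀ := by
    have := hsz₁ ▸ hpmem
    exact (mem_compSet_iff.mp this).2
  have hK : btw T (T.ι p) z₀ (T.ι b) := by
    by_contra hKc
    exact hnpz₁z₀ (btw_adj_dichotomy hadj01 (not_btw_glue hKc (nbtw_symm hnbtw10b)))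
  -- p and a are on the same side of z₁
  have hN : sideL T p z₁ = sideL T a z₁ := by
    apply sideL_congr
    intro hbw
    have hd := btw_decomp (btw_symm hJ)
    have hbw' : z₁ ∈ (T.treePath (T.ι a) (T.ι p)).support := hbw
    rw [hd, SimpleGraph.Walk.mem_support_append_iff] at hbw'
    rcases hbw' with hbw' | hbw'
    · exact hnacz hbw'
    · exact hnpz₁z₀ (btw_symm hbw')
  -- the p-side of z₀ and the cord s(a,p)
  have hιpz₀ : T.ι p ≠ z₀ := fun h => hz₀int ⟨p, hpX, h⟩
  obtain ⟨uc, hadjuc, hnuc⟩ := side_neighbor (T := T) hιpz₀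
  have hbtwpz₀z₁ : btw T (T.ι p) z₀ z₁ := btw_adj_dichotomy hadj01.symm hnpz₁z₀
  have hsubC : sideL T p z₀ ⊆ sideL T a z₁ := by
    rintro y ⟨hyX, hyb⟩
    refine ⟨hyX, ?_⟩
    have hyz₀z₁ : btw T (T.ι y) z₀ z₁ := by
      by_contra hyy
      exact (not_btw_glue (nbtw_symm hyb) hyy) hbtwpz₀z₁
    intro hya
    exact hne01 (btw_nodup hya hyz₀z₁ (btw_symm hE))
  have hfC : f (sideL T p z₀) = p := by
    have := hf.2 _ (sideL_mem_clus hιaz₁) _ (sideL_mem_clus hιpz₀)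
      (by rw [← hp]; exact self_mem_sideL hpX hιpz₀.symm) hsubC
    rw [← hp] at this
    exact this.symm
  have hQ : s(a, p) ∈ tripletCoverOf T f := by
    have hneuauc : ua ≠ uc := by
      rintro rfl
      exact (not_btw_glue hnua (nbtw_symm hnuc)) (btw_symm hJ)
    refine ⟨z₀, ua, uc, hz₀int, hadjua, hadjuc, hneuauc, ?_⟩
    rw [← sideL_eq_compSet hadjua hnua, ← sideL_eq_compSet hadjuc hnuc, hfz₀, hfC]
  have hpb : p ≠ b := by
    intro h
    exact hmiss (h ▸ hQ)
  exact ⟨z₀, z₁, p, hz₀int, hz₁int, hadj01, hz₀btw, hz₁btw, hE, hbtw01b,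
    hpX, hpa, hpb, hJ, hK, hfz₀, hz₀card, hN, hp.symm, hP, hQ⟩

end STCaux
namespace STCaux
open SimpleGraph XTree

variable {α : Type} {X : Set α} {T : XTree α X} {f : Set α → α}

lemma exists_pivots (hfin : X.Finite) (hcard : 3 ≤ X.ncard) (hT : T.IsFullyResolved)
    (hf : IsStableTransversal (clus T) f)
    {a b : α} (ha : a ∈ X) (hb : b ∈ X) (hab : a ≠ b)
    (hmiss : s(a, b) ∉ tripletCoverOf T f) :
    ∃ p q : α, Quartet T a p q b ∧
      s(a, p) ∈ tripletCoverOf T f ∧ s(b, q) ∈ tripletCoverOf T f ∧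
      mu T f s(a, b) < mu T f s(a, q) ∧ mu T f s(a, b) < mu T f s(b, p) ∧
      mu T f s(a, b) < mu T f s(p, q) := by
  have hmiss' : s(b, a) ∉ tripletCoverOf T f := by rwa [Sym2.eq_swap] at hmiss
  obtain ⟨z₀, z₁, p, Az₀int, Az₁int, Aadj, Abtw0, Abtw1, AE, A01b, ApX, Apa, Apb,
    AJ, AK, Afz₀, Acard, AN, Afp, AP, AQ⟩ := main_side hfin hcard hT hf ha hb hab hmiss
  obtain ⟨w₀, w₁, q, Bw₀int, Bw₁int, Badj, Bbtw0, Bbtw1, BE, B01a, BqX, Bqb, Bqa,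
    BJ, BK, Bfw₀, Bcard, BN, Bfq, BP, BQ⟩ :=
    main_side hfin hcard hT hf hb ha (Ne.symm hab) hmiss'
  -- step 1 : z₀ lies strictly before w₀ on the path from a to b
  have h1a : ¬ btw T (T.ι a) w₀ z₀ := by
    intro hwz
    have hιaw₀ : T.ι a ≠ w₀ := fun h => Bw₀int ⟨a, ha, h⟩
    have hsub : sideL T a w₀ ⊆ sideL T a z₀ := sideL_subset hwz
    have hιaz₀ : T.ι a ≠ z₀ := fun h => Az₀int ⟨a, ha, h⟩
    have hstab := hf.2 _ (sideL_mem_clus hιaz₀) _ (sideL_mem_clus hιaw₀)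
      (by rw [Afz₀]; exact self_mem_sideL ha hιaw₀.symm) hsub
    rw [Afz₀] at hstab
    exact hmiss (triplet_mem hf ha hb Bw₀int (btw_symm Bbtw0) hstab.symm Bfw₀)
  have hz₀w₀ : z₀ ≠ w₀ := by
    intro h
    subst h
    exact h1a btw_right
  have h1c : btw T (T.ι a) z₀ w₀ :=
    (btw_total Abtw0 (btw_symm Bbtw0)).resolve_right h1a
  have h2 : btw T z₀ w₀ (T.ι b) := btw_push h1c (btw_symm Bbtw0)
  -- the hanging lemma at z₀ vs w₀
  have hng : ∀ y : T.V, btw T y z₀ (T.ι a) → btw T y z₀ (T.ι b) → ¬ btw T y w₀ (T.ι a) := by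
    intro y hy1 hy2 hyw
    have hd := btw_decomp hy1
    have hyw' : w₀ ∈ (T.treePath y (T.ι a)).support := hyw
    rw [hd, SimpleGraph.Walk.mem_support_append_iff] at hyw'
    rcases hyw' with hyw' | hyw'
    · exact hz₀w₀ (btw_nodup hy2 hyw' h2).symm
    · exact h1a (btw_symm hyw')
  have hngp : ¬ btw T (T.ι p) w₀ (T.ι a) := hng (T.ι p) AJ AK
  have hpq : p ≠ q := by
    intro h
    exact hngp (h ▸ BK)
  -- the quartet a p | q b
  have hquartet : Quartet T a p q b := by
    refine ⟨ha, ApX, BqX, hb, ?_, ?_⟩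
    · -- pairwise distinct
      refine List.Pairwise.cons ?_ (List.Pairwise.cons ?_ (List.Pairwise.cons ?_
        (List.Pairwise.cons (fun y hy => absurd hy List.not_mem_nil) List.Pairwise.nil)))
      · intro y hy
        simp only [List.mem_cons, List.mem_singleton, List.not_mem_nil, or_false] at hy
        rcases hy with rfl | rfl | rfl
        exacts [Ne.symm Apa, Ne.symm Bqa, hab]
      · intro y hy
        simp only [List.mem_cons, List.mem_singleton, List.not_mem_nil, or_false] at hy
        rcases hy with rfl | rfl
        exacts [hpq, Apb]
      · intro y hy
        simp only [List.mem_cons, List.mem_singleton, List.not_mem_nil, or_false] at hy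
        subst hy
        exact Bqb
    · -- vertex-disjoint paths
      intro P Q hP hQ v hvP hvQ
      rw [tp_unique P hP] at hvP
      rw [tp_unique Q hQ] at hvQ
      -- every vertex of path(q,b) is beyond w₀ as seen from a
      have claim2 : ∀ z, z ∈ (T.treePath (T.ι q) (T.ι b)).support → btw T (T.ι a) w₀ z := by
        intro z hz
        have hd := btw_decomp BJ
        rw [hd, SimpleGraph.Walk.mem_support_append_iff] at hz
        by_cases hzw : z = w₀
        · subst hzw; exact btw_right
        rcases hz with hz | hz
        · have hzw' : btw T (T.ι q) z w₀ := hz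
          by_contra hcc
          have hqz : ¬ btw T z w₀ (T.ι q) := fun hh => hzw (btw_antisym' (btw_symm hzw') hh).symm
          exact (not_btw_glue hcc hqz) (btw_symm BK)
        · have hzw' : btw T w₀ z (T.ι b) := hz
          by_contra hcc
          have hzb : ¬ btw T z w₀ (T.ι b) := fun hh => hzw (btw_antisym' hzw' hh).symm
          exact (not_btw_glue hcc hzb) (btw_symm Bbtw0)
      have hq2 : btw T (T.ι a) w₀ v := claim2 v hvQ
      have hbv : btw T (T.ι a) v (T.ι p) := hvP
      exact (nbtw_symm hngp) (btw_mem_decomp_left hbv hq2)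
  -- the measure inequalities
  have hd1 : half T f a b ≤ half T f a q := by
    have hbtw : btw T (T.ι a) z₀ (T.ι q) := btw_mem_decomp_left (btw_symm BK) h1c
    have hmem : (sideL T a z₀).ncard ∈ halfSet T f a q := ⟨z₀, Az₀int, hbtw, Afz₀, rfl⟩
    exact Acard ▸ le_half hfin hmem
  have hd2 : half T f b a < half T f q a := by
    have hbtw : btw T (T.ι q) w₁ (T.ι a) := btw_mem_decomp_right BK B01a
    have hmem : (sideL T b w₁).ncard ∈ halfSet T f q a := by
      refine ⟨w₁, Bw₁int, hbtw, ?_, ?_⟩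
      · rw [BN]; exact Bfq
      · rw [BN]
    exact lt_of_lt_of_le BP (le_half hfin hmem)
  have hd3 : half T f b a ≤ half T f b p := by
    have hbtw : btw T (T.ι b) w₀ (T.ι p) := btw_mem_decomp_left (btw_symm AK) (btw_symm h2)
    have hmem : (sideL T b w₀).ncard ∈ halfSet T f b p := ⟨w₀, Bw₀int, hbtw, Bfw₀, rfl⟩
    exact Bcard ▸ le_half hfin hmem
  have hd4 : half T f a b < half T f p b := by
    have hbtw : btw T (T.ι p) z₁ (T.ι b) := btw_mem_decomp_right AK A01b
    have hmem : (sideL T a z₁).ncard ∈ halfSet T f p b := by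
      refine ⟨z₁, Az₁int, hbtw, ?_, ?_⟩
      · rw [AN]; exact Afp
      · rw [AN]
    exact lt_of_lt_of_le AP (le_half hfin hmem)
  -- positions for the cord p q
  have hnqz₀b : ¬ btw T (T.ι q) z₀ (T.ι b) := by
    intro hzz
    have hd := btw_decomp BJ
    have hzz' : z₀ ∈ (T.treePath (T.ι q) (T.ι b)).support := hzz
    rw [hd, SimpleGraph.Walk.mem_support_append_iff] at hzz'
    rcases hzz' with hzz' | hzz'
    · exact hz₀w₀ (btw_nodup BK hzz' (btw_symm h1c))
    · exact hz₀w₀ (btw_antisym' h2 hzz')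
  have hpz₀q : btw T (T.ι p) z₀ (T.ι q) := by
    by_contra hcc
    exact (not_btw_glue hcc hnqz₀b) AK
  have hz₀w₀q : btw T z₀ w₀ (T.ι q) := by
    by_contra hcc
    exact (not_btw_glue h1a hcc) (btw_symm BK)
  have hz₀z₁w₀ : btw T z₀ z₁ w₀ := by
    rcases btw_total A01b h2 with hh | hh
    · exact hh
    · have := (btw_adj_iff Aadj).mp hh
      rcases this with rfl | rfl
      · exact absurd rfl hz₀w₀
      · exact btw_right
  have hd5 : half T f a b < half T f p q := by
    have hbtw : btw T (T.ι p) z₁ (T.ι q) :=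
      btw_mem_decomp_right hpz₀q (btw_mem_decomp_left hz₀w₀q hz₀z₁w₀)
    have hmem : (sideL T a z₁).ncard ∈ halfSet T f p q := by
      refine ⟨z₁, Az₁int, hbtw, ?_, ?_⟩
      · rw [AN]; exact Afp
      · rw [AN]
    exact lt_of_lt_of_le AP (le_half hfin hmem)
  have hqw₀p : btw T (T.ι q) w₀ (T.ι p) := by
    by_contra hcc
    exact (not_btw_glue hcc hngp) BK
  have hw₀z₀p : btw T w₀ z₀ (T.ι p) := btw_push (btw_symm h2) (btw_symm AK)
  have hw₀w₁z₀ : btw T w₀ w₁ z₀ := by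
    rcases btw_total B01a (btw_symm h1c) with hh | hh
    · exact hh
    · have := (btw_adj_iff Badj).mp hh
      rcases this with rfl | rfl
      · exact absurd rfl (Ne.symm hz₀w₀)
      · exact btw_right
  have hd6 : half T f b a < half T f q p := by
    have hbtw : btw T (T.ι q) w₁ (T.ι p) :=
      btw_mem_decomp_right hqw₀p (btw_mem_decomp_left hw₀z₀p hw₀w₁z₀)
    have hmem : (sideL T b w₁).ncard ∈ halfSet T f q p := by
      refine ⟨w₁, Bw₁int, hbtw, ?_, ?_⟩
      · rw [BN]; exact Bfq
      · rw [BN]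
    exact lt_of_lt_of_le BP (le_half hfin hmem)
  refine ⟨p, q, hquartet, AQ, BQ, ?_, ?_, ?_⟩
  · rw [mu_mk, mu_mk]; omega
  · rw [mu_mk, mu_mk]; omega
  · rw [mu_mk, mu_mk]; omega

end STCaux
open XTree STCaux in
theorem stableTripletCover_isShellableLasso' {α : Type} (X : Set α) (hfin : X.Finite)
    (hcard : 3 ≤ X.ncard) (T : XTree α X) (hT : T.IsFullyResolved)
    (L : Set (Sym2 α)) (hL : IsStableTripletCover T L) :
    IsShellableLasso T L := by
  classical
  obtain ⟨f, hf, rfl⟩ := hL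
  -- Part 1 : L ⊆ cords X
  have hsub : tripletCoverOf T f ⊆ cords X := by
    rintro c ⟨v, u₁, u₂, hint, h1, h2, hne, rfl⟩
    have hm₁ := hf.1 _ (compSet_mem_clus h1)
    have hm₂ := hf.1 _ (compSet_mem_clus h2)
    constructor
    · intro hdiag
      rw [Sym2.isDiag_iff_proj_eq] at hdiag
      rw [hdiag] at hm₁
      exact compSet_disjoint h1 h2 hne hm₁ hm₂
    · intro y hy
      rw [Sym2.mem_iff] at hy
      rcases hy with rfl | rfl
      · exact compSet_subset_X hm₁
      · exact compSet_subset_X hm₂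
  refine ⟨hsub, ?_, ?_⟩
  -- Part 2 : every element of X appears in a cord of L
  · intro a ha
    obtain ⟨v₁, hv₁⟩ := leaf_unique_neighbor (T := T) ha
    have hadjav₁ : T.tree.Adj (T.ι a) v₁ := by
      rw [← SimpleGraph.mem_neighborSet, hv₁]; rfl
    have hint : T.IsInterior v₁ := leaf_neighbor_interior hcard ha hv₁
    obtain ⟨u₂, hadju₂, hu₂a, _⟩ := exists_neighbor_notin hT hint (T.ι a) (T.ι a)
    have hfa : f (T.compSet v₁ (T.ι a)) = a := by
      have heq : sideL T a v₁ = T.compSet v₁ (T.ι a) := by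
        apply sideL_eq_compSet hadjav₁.symm
        rw [btw_self_iff]
        exact hadjav₁.ne'
      have hmem := f_mem_sideL hf (show T.ι a ≠ v₁ from hadjav₁.ne)
      rw [pendant_sideL ha hv₁] at hmem
      rw [← heq, pendant_sideL ha hv₁]
      exact hmem
    refine ⟨s(f (T.compSet v₁ (T.ι a)), f (T.compSet v₁ u₂)),
      ⟨v₁, T.ι a, u₂, hint, hadjav₁.symm, hadju₂, Ne.symm hu₂a, rfl⟩, ?_⟩
    rw [hfa]
    exact Sym2.mem_mk_left _ _
  -- Part 3 : the shellable ordering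
  · have hcordsfin : (cords X).Finite := by
      apply Set.Finite.subset ((hfin.prod hfin).image (fun p : α × α => s(p.1, p.2)))
      rintro c ⟨hdiag, hmem⟩
      induction c using Sym2.ind with
      | _ x y =>
        exact ⟨(x, y), ⟨hmem x (Sym2.mem_mk_left x y), hmem y (Sym2.mem_mk_right x y)⟩, rfl⟩
    have hMfin : (cords X \ tripletCoverOf T f).Finite :=
      hcordsfin.subset Set.diff_subset
    set r : Sym2 α → Sym2 α → Prop := fun c d => mu T f d ≤ mu T f c with hr
    haveI : DecidableRel r := fun _ _ => Nat.decLe _ _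
    haveI htot : IsTotal (Sym2 α) r := ⟨fun c d => le_total (mu T f d) (mu T f c)⟩
    haveI htrans : IsTrans (Sym2 α) r := ⟨fun _ _ _ h1 h2 => le_trans h2 h1⟩
    set ord : List (Sym2 α) := List.insertionSort r hMfin.toFinset.toList with hord
    have hperm : ord.Perm hMfin.toFinset.toList := List.perm_insertionSort r _
    have hnodup : ord.Nodup := hperm.nodup_iff.mpr (Finset.nodup_toList _)
    have hmemiff : ∀ c, c ∈ ord ↔ c ∈ cords X \ tripletCoverOf T f := by
      intro c
      rw [hperm.mem_iff, Finset.mem_toList, Set.Finite.mem_toFinset]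
    have hsorted : List.Pairwise r ord := List.pairwise_insertionSort r _
    refine ⟨ord, hnodup, hmemiff, ?_⟩
    intro i h
    have hc : ord.get ⟨i, h⟩ ∈ cords X \ tripletCoverOf T f :=
      (hmemiff _).mp (List.get_mem _ _)
    -- the earlier-cord principle
    have hearlier : ∀ d, d ∈ cords X → mu T f (ord.get ⟨i, h⟩) < mu T f d →
        d ∈ tripletCoverOf T f ∨ d ∈ ord.take i := by
      intro d hdc hdmu
      by_cases hdL : d ∈ tripletCoverOf T f
      · exact Or.inl hdL
      right
      have hdm : d ∈ ord := (hmemiff d).mpr ⟨hdc, hdL⟩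
      obtain ⟨j, hdj⟩ := List.mem_iff_get.mp hdm
      have hji : (j : ℕ) < i := by
        by_contra hji
        push_neg at hji
        rcases Nat.lt_or_ge i j with hij | hij
        · have := hsorted.rel_get_of_lt (show (⟨i, h⟩ : Fin ord.length) < j from hij)
          rw [hdj] at this
          exact absurd this (by rw [hr]; omega)
        · have hij' : (j : ℕ) = i := le_antisymm (by omega) hji
          have : ord.get ⟨i, h⟩ = d := by
            rw [← hdj]
            congr 1
            exact Fin.ext hij'.symm
          rw [this] at hdmu
          omega
      have hjlen : (j : ℕ) < (ord.take i).length := by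
        rw [List.length_take]
        exact lt_min hji j.2
      have : (ord.take i).get ⟨j, hjlen⟩ = d := by
        rw [← hdj]
        simp [List.getElem_take]
      rw [← this]
      exact List.get_mem _ _
    -- decompose the cord
    obtain ⟨⟨a, b⟩, hrep⟩ := Quot.exists_rep (ord.get ⟨i, h⟩)
    have hrep' : ord.get ⟨i, h⟩ = s(a, b) := hrep.symm
    rw [hrep'] at hc
    have hab : a ≠ b := by
      intro hh
      exact hc.1.1 (by rw [Sym2.isDiag_iff_proj_eq]; exact hh)
    have ha : a ∈ X := hc.1.2 a (Sym2.mem_mk_left a b)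
    have hb : b ∈ X := hc.1.2 b (Sym2.mem_mk_right a b)
    have hmiss : s(a, b) ∉ tripletCoverOf T f := hc.2
    obtain ⟨p, q, hquartet, hap, hbq, hμ1, hμ2, hμ3⟩ :=
      exists_pivots hfin hcard hT hf ha hb hab hmiss
    have hpX : p ∈ X := hquartet.2.1
    have hqX : q ∈ X := hquartet.2.2.1
    have hdist := hquartet.2.2.2.2.1
    -- extract distinctness from the pairwise list
    have haq : a ≠ q := by
      have := (List.pairwise_cons.mp hdist).1 q (by simp)
      exact this
    have hpb : p ≠ b := by
      have h2' := (List.pairwise_cons.mp hdist).2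
      have := (List.pairwise_cons.mp h2').1 b (by simp)
      exact this
    have hpq : p ≠ q := by
      have h2' := (List.pairwise_cons.mp hdist).2
      have := (List.pairwise_cons.mp h2').1 q (by simp)
      exact this
    refine ⟨a, b, p, q, hrep', hquartet, ?_⟩
    intro c' hc'
    have hrw : mu T f (ord.get ⟨i, h⟩) = mu T f s(a, b) := by rw [hrep']
    simp only [List.mem_cons, List.mem_singleton, List.not_mem_nil, or_false] at hc'
    rcases hc' with rfl | rfl | rfl | rfl | rfl
    · exact Or.inl hap
    · refine hearlier _ ⟨?_, ?_⟩ (by rw [hrw]; exact hμ1)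
      · rw [Sym2.isDiag_iff_proj_eq]; exact haq
      · intro y hy
        rw [Sym2.mem_iff] at hy
        rcases hy with rfl | rfl
        exacts [ha, hqX]
    · refine hearlier _ ⟨?_, ?_⟩ (by rw [hrw]; exact hμ2)
      · rw [Sym2.isDiag_iff_proj_eq]; exact fun hh => hpb hh.symm
      · intro y hy
        rw [Sym2.mem_iff] at hy
        rcases hy with rfl | rfl
        exacts [hb, hpX]
    · exact Or.inl hbq
    · refine hearlier _ ⟨?_, ?_⟩ (by rw [hrw]; exact hμ3)
      · rw [Sym2.isDiag_iff_proj_eq]; exact hpq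
      · intro y hy
        rw [Sym2.mem_iff] at hy
        rcases hy with rfl | rfl
        exacts [hpX, hqX]

open XTree in
/-- If `L` is a stable triplet cover of a fully-resolved `X`-tree `T`
with `n := |X| ≥ 3`, then `L` is a shellable lasso for `T`, i.e. `cords X - L`
is `T`-shellable. -/
theorem stableTripletCover_isShellableLasso {α : Type} (X : Set α) (hfin : X.Finite)
    (hcard : 3 ≤ X.ncard) (T : XTree α X) (hT : T.IsFullyResolved)
    (L : Set (Sym2 α)) (hL : IsStableTripletCover T L) :
    IsShellableLasso T L := by
  exact stableTripletCover_isShellableLasso' X hfin hcard T hT L hL
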